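/- Let X be a Hausdorff space and κ an infinite cardinal. Suppose every family of pairwise disjoint nonempty open sets in X has cardinality at most κ, and every point of X has a linked local π-base of cardinality at most κ. Then |X| ≤ 2^κ. -/

import Mathlib

open Set Topology Cardinal

universe u

/-- A local π-base at `p`: a family of nonempty open sets such that every open
set containing `p` contains a member of the family. -/
def IsLocalPiBase {X : Type u} [TopologicalSpace X] (p : X) (𝓑 : Set (Set X)) : Prop :=
  (∀ b ∈ 𝓑, IsOpen b ∧ b.Nonempty) ∧
  ∀ U : Set X, IsOpen U → p ∈ U → ∃ b ∈ 𝓑, b ⊆ U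

/-- A family of sets is centered if it has the finite intersection property. -/
def Centered {X : Type u} (𝓑 : Set (Set X)) : Prop :=
  ∀ F : Finset (Set X), F.Nonempty → ↑F ⊆ 𝓑 → (⋂₀ (F : Set (Set X))).Nonempty

/-- A family of sets is linked if any two members meet. -/
def Linked {X : Type u} (𝓑 : Set (Set X)) : Prop :=
  ∀ b₁ ∈ 𝓑, ∀ b₂ ∈ 𝓑, (b₁ ∩ b₂).Nonempty

/-- A decreasing local π-base at `p`, given as a ⊆-decreasing sequence of
nonempty open sets. -/
def IsDecreasingLocalPiBase {X : Type u} [TopologicalSpace X] (p : X) (A : ℕ → Set X) : Prop :=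
  (∀ n, IsOpen (A n) ∧ (A n).Nonempty) ∧
  (∀ n, A (n + 1) ⊆ A n) ∧
  ∀ U : Set X, IsOpen U → p ∈ U → ∃ n, A n ⊆ U

/-- A cellular family: pairwise disjoint nonempty open sets. -/
def IsCellular {X : Type u} [TopologicalSpace X] (𝓒 : Set (Set X)) : Prop :=
  (∀ c ∈ 𝓒, IsOpen c ∧ c.Nonempty) ∧ 𝓒.PairwiseDisjoint id

/-- A weak closed pseudobase at `p`: a family of open sets whose closures
intersect exactly in `{p}`. -/
def IsWeakClosedPseudobase {X : Type u} [TopologicalSpace X] (p : X) (𝓑 : Set (Set X)) : Prop :=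
  (∀ b ∈ 𝓑, IsOpen b) ∧ (⋂ b ∈ 𝓑, closure b) = {p}

/-- A neighborhood base at `p` consisting of open sets containing `p`. -/
def IsNhdBase {X : Type u} [TopologicalSpace X] (p : X) (𝓑 : Set (Set X)) : Prop :=
  (∀ b ∈ 𝓑, IsOpen b ∧ p ∈ b) ∧
  ∀ U : Set X, IsOpen U → p ∈ U → ∃ b ∈ 𝓑, b ⊆ U


section ErdosRadoAux

variable {α C : Type u}

private lemma aux_two_pow_infinite {κ : Cardinal.{u}} (hκ : ℵ₀ ≤ κ) : ℵ₀ ≤ 2 ^ κ :=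
  hκ.trans (Cardinal.cantor κ).le

private lemma aux_mul_le {κ : Cardinal.{u}} (hκ : ℵ₀ ≤ κ) {a b : Cardinal.{u}}
    (ha : a ≤ 2 ^ κ) (hb : b ≤ 2 ^ κ) : a * b ≤ 2 ^ κ := by
  calc a * b ≤ 2 ^ κ * 2 ^ κ := mul_le_mul' ha hb
  _ = 2 ^ κ := Cardinal.mul_eq_self (aux_two_pow_infinite hκ)

private lemma aux_pow_le {κ : Cardinal.{u}} (hκ : ℵ₀ ≤ κ) {a : Cardinal.{u}}
    (ha : a ≤ 2 ^ κ) : a ^ κ ≤ 2 ^ κ := by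
  calc a ^ κ ≤ (2 ^ κ) ^ κ := Cardinal.power_le_power_right ha
  _ = 2 ^ (κ * κ) := (Cardinal.power_mul).symm
  _ = 2 ^ κ := by rw [Cardinal.mul_eq_self hκ]

/-- Every nonempty set of cardinality at most `#μ` is the range of a function from `μ`. -/
private lemma exists_range_eq {μ : Type u} (s : Set α) (hs : s.Nonempty)
    (h : #s ≤ #μ) : ∃ u : μ → α, Set.range u = s := by
  classical
  obtain ⟨emb⟩ := Cardinal.le_def _ _ |>.1 h
  haveI : Nonempty s := hs.to_subtype
  refine ⟨fun i => (Function.invFun emb i : s), ?_⟩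
  ext x
  constructor
  · rintro ⟨i, rfl⟩
    exact (Function.invFun emb i).2
  · intro hx
    exact ⟨emb ⟨x, hx⟩,
      congrArg Subtype.val (Function.leftInverse_invFun emb.injective ⟨x, hx⟩)⟩

/-- Initial segments of `(succ κ).ord.ToType` have cardinality at most `κ`. -/
private lemma initialSeg_card_le {κ : Cardinal.{u}} (i : (Order.succ κ).ord.ToType) :
    #{j // j < i} ≤ κ := by
  haveI : IsWellOrder (Order.succ κ).ord.ToType (· < ·) := isWellOrder_lt
  have h2 := Cardinal.lt_ord.1 (Ordinal.typein_lt_self (o := (Order.succ κ).ord) i)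
  have h3 : #{j // j < i} =
      (Ordinal.typein (α := (Order.succ κ).ord.ToType) (· < ·) i).card :=
    Ordinal.card_typein (r := ((· < ·) : (Order.succ κ).ord.ToType →
      (Order.succ κ).ord.ToType → Prop)) i
  rw [h3]
  exact Order.lt_succ_iff.1 h2

/-- The choice of a "new" point realizing a prescribed type `g` over `u`. -/
private noncomputable def ERpick [Nonempty α] (f : α → α → C) {μ : Type u}
    (u : μ → α) (g : μ → C) : α :=
  Classical.epsilon fun a => a ∉ Set.range u ∧ ∀ i, f (u i) a = g i

private lemma ERpick_spec [Nonempty α] (f : α → α → C) {μ : Type u}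
    {u : μ → α} {g : μ → C} (h : ∃ a : α, a ∉ Set.range u ∧ ∀ i, f (u i) a = g i) :
    ERpick f u g ∉ Set.range u ∧ ∀ i, f (u i) (ERpick f u g) = g i :=
  Classical.epsilon_spec_aux _ _ h

/-- One closure step: add witnesses for all small subsets of `S` and all types over them. -/
private noncomputable def ERstep [Nonempty α] (f : α → α → C) (μ : Type u) (S : Set α) :
    Set α :=
  insert (Classical.arbitrary α)
    (S ∪ {x | ∃ u : μ → α, ∃ g : μ → C, Set.range u ⊆ S ∧ ERpick f u g = x})

private lemma ERstep_card [Nonempty α] {κ : Cardinal.{u}} (hκ : ℵ₀ ≤ κ) (hC : #C ≤ κ)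
    {μ : Type u} (hμ : #μ = κ) (f : α → α → C) {S : Set α} (hS : #S ≤ 2 ^ κ) :
    #(ERstep f μ S) ≤ 2 ^ κ := by
  have h2κ := aux_two_pow_infinite hκ
  have hW : #{x | ∃ u : μ → α, ∃ g : μ → C, Set.range u ⊆ S ∧ ERpick f u g = x} ≤ 2 ^ κ := by
    have hsub : {x | ∃ u : μ → α, ∃ g : μ → C, Set.range u ⊆ S ∧ ERpick f u g = x} ⊆
        Set.range (fun p : (μ → S) × (μ → C) => ERpick f (fun i => (p.1 i : α)) p.2) := by
      rintro x ⟨u, g, hu, rfl⟩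
      refine ⟨⟨fun i => ⟨u i, hu (Set.mem_range_self i)⟩, g⟩, rfl⟩
    refine (Cardinal.mk_le_mk_of_subset hsub).trans (Cardinal.mk_range_le.trans ?_)
    have heq : #((μ → S) × (μ → C)) = #(μ → S) * #(μ → C) := by
      rw [Cardinal.mk_prod, Cardinal.lift_id, Cardinal.lift_id]
    rw [heq]
    refine aux_mul_le hκ ?_ ?_
    · rw [← Cardinal.power_def, hμ]
      exact aux_pow_le hκ hS
    · rw [← Cardinal.power_def, hμ]
      exact aux_pow_le hκ (hC.trans (Cardinal.cantor κ).le)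
  refine Cardinal.mk_insert_le.trans ?_
  have h1 : (1 : Cardinal) ≤ 2 ^ κ := le_trans (by norm_num) h2κ
  calc #(S ∪ _ : Set α) + 1 ≤ (#S + _) + 1 := add_le_add_left (Cardinal.mk_union_le _ _) 1
  _ ≤ (2 ^ κ + 2 ^ κ) + 2 ^ κ := add_le_add (add_le_add hS hW) h1
  _ = 2 ^ κ := by rw [Cardinal.add_eq_self h2κ, Cardinal.add_eq_self h2κ]

private lemma ERstep_spec [Nonempty α] {κ : Cardinal.{u}} {μ : Type u} (hμ : #μ = κ)
    (f : α → α → C) {S s : Set α} {y : α} (hsS : s ⊆ S) (hsne : s.Nonempty)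
    (hscard : #s ≤ κ) (hy : y ∉ s) :
    ∃ a ∈ ERstep f μ S, a ∉ s ∧ ∀ b ∈ s, f b a = f b y := by
  obtain ⟨u, hu⟩ := exists_range_eq (μ := μ) s hsne (by rw [hμ]; exact hscard)
  have hex : ∃ a : α, a ∉ Set.range u ∧ ∀ i, f (u i) a = (fun i => f (u i) y) i :=
    ⟨y, by rw [hu]; exact hy, fun i => rfl⟩
  obtain ⟨hp1, hp2⟩ := ERpick_spec f hex
  refine ⟨ERpick f u (fun i => f (u i) y), ?_, ?_, ?_⟩
  · exact Set.mem_insert_of_mem _ (Set.mem_union_right _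
      ⟨u, fun i => f (u i) y, by rw [hu]; exact hsS, rfl⟩)
  · rw [← hu]; exact hp1
  · intro b hb
    rw [← hu] at hb
    obtain ⟨i, rfl⟩ := hb
    exact hp2 i

/-- The transfinite chain of closure steps. -/
private noncomputable def ERchain [Nonempty α] (f : α → α → C) (μ : Type u)
    {I : Type u} [LinearOrder I] [WellFoundedLT I] : I → Set α :=
  wellFounded_lt.fix fun i rec => ERstep f μ (⋃ j, ⋃ hj : j < i, rec j hj)

private lemma ERchain_eq [Nonempty α] (f : α → α → C) (μ : Type u)
    {I : Type u} [LinearOrder I] [WellFoundedLT I] (i : I) :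
    ERchain f μ i = ERstep f μ (⋃ j, ⋃ _hj : j < i, ERchain f μ j) :=
  wellFounded_lt.fix_eq _ i

/-- The closed set `A`. -/
private lemma exists_closed_set {κ : Cardinal.{u}} (hκ : ℵ₀ ≤ κ)
    (hC : #C ≤ κ) [Nonempty α] (f : α → α → C) :
    ∃ A : Set α, #A ≤ 2 ^ κ ∧
      ∀ s : Set α, s ⊆ A → #s ≤ κ → ∀ y : α, y ∉ s →
        ∃ a ∈ A, a ∉ s ∧ ∀ b ∈ s, f b a = f b y := by
  classical
  have hμ : #(κ.ord.ToType) = κ := Cardinal.mk_ord_toType κ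
  have hsucc0 : (Order.succ κ) ≠ 0 :=
    (lt_of_lt_of_le (lt_of_lt_of_le Cardinal.aleph0_pos hκ) (Order.le_succ κ)).ne'
  haveI : Nonempty ((Order.succ κ).ord.ToType) := by
    rw [Ordinal.toType_nonempty_iff_ne_zero, ne_eq, Cardinal.ord_eq_zero]
    exact hsucc0
  have hChcard : ∀ i : (Order.succ κ).ord.ToType,
      #(ERchain f κ.ord.ToType i) ≤ 2 ^ κ := by
    intro i
    refine wellFounded_lt.induction
      (C := fun i : (Order.succ κ).ord.ToType => #(ERchain f κ.ord.ToType i) ≤ 2 ^ κ)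
      i (fun i ih => ?_)
    show #(ERchain f κ.ord.ToType i) ≤ 2 ^ κ
    have ih' : ∀ y, y < i → #(ERchain f κ.ord.ToType y) ≤ 2 ^ κ := ih
    rw [ERchain_eq]
    refine ERstep_card hκ hC hμ f ?_
    have heq : (⋃ j, ⋃ _hj : j < i, ERchain f κ.ord.ToType j) =
        ⋃ j : {j : (Order.succ κ).ord.ToType // j < i}, ERchain f κ.ord.ToType j.1 := by
      ext x
      simp only [Set.mem_iUnion]
      constructor
      · rintro ⟨j, hj, hx⟩; exact ⟨⟨j, hj⟩, hx⟩
      · rintro ⟨⟨j, hj⟩, hx⟩; exact ⟨j, hj, hx⟩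
    rw [heq]
    refine (Cardinal.mk_iUnion_le _).trans ?_
    exact aux_mul_le hκ ((initialSeg_card_le i).trans (Cardinal.cantor κ).le)
      (ciSup_le' fun j => ih' j.1 j.2)
  refine ⟨⋃ i : (Order.succ κ).ord.ToType, ERchain f κ.ord.ToType i, ?_, ?_⟩
  · refine (Cardinal.mk_iUnion_le _).trans ?_
    refine aux_mul_le hκ ?_ (ciSup_le' fun i => hChcard i)
    rw [Cardinal.mk_ord_toType]
    exact Order.succ_le_of_lt (Cardinal.cantor κ)
  · intro s hsA hscard y hy
    rcases s.eq_empty_or_nonempty with rfl | hsne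
    · refine ⟨Classical.arbitrary α, ?_, by simp, by simp⟩
      exact Set.mem_iUnion.2 ⟨Classical.arbitrary _,
        by rw [ERchain_eq]; exact Set.mem_insert _ _⟩
    · haveI : IsWellOrder (Order.succ κ).ord.ToType (· < ·) := isWellOrder_lt
      have hstage : ∀ b : s, ∃ i : (Order.succ κ).ord.ToType,
          (b : α) ∈ ERchain f κ.ord.ToType i := fun b => Set.mem_iUnion.1 (hsA b.2)
      choose v hv using hstage
      have hreg : ((Order.succ κ).ord).cof = Order.succ κ :=
        (Cardinal.isRegular_succ hκ).cof_eq
      have hslt : #s < ((Order.succ κ).ord).cof := by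
        rw [hreg]; exact lt_of_le_of_lt hscard (Order.lt_succ κ)
      have hlim : Order.IsSuccLimit ((Order.succ κ).ord) :=
        Cardinal.isSuccLimit_ord (hκ.trans (Order.le_succ κ))
      have hsup : (⨆ b : s, Order.succ
          (Ordinal.typein (α := (Order.succ κ).ord.ToType) (· < ·) (v b)))
          < (Order.succ κ).ord :=
        Ordinal.iSup_lt_ord hslt fun b => hlim.succ_lt (Ordinal.typein_lt_self (v b))
      set i₂ : (Order.succ κ).ord.ToType :=
        Ordinal.enum (α := (Order.succ κ).ord.ToType) (· < ·)
        ⟨_, by rw [Set.mem_Iio, Ordinal.type_toType]; exact hsup⟩ with hi₂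
      have hvi : ∀ b : s, v b < i₂ := by
        intro b
        have h1 : Ordinal.typein (α := (Order.succ κ).ord.ToType) (· < ·) (v b) <
            Ordinal.typein (α := (Order.succ κ).ord.ToType) (· < ·) i₂ := by
          rw [hi₂]
          erw [Ordinal.typein_enum]
          exact lt_of_lt_of_le (Order.lt_succ _)
            (Ordinal.le_iSup (fun b : s => Order.succ
              (Ordinal.typein (α := (Order.succ κ).ord.ToType) (· < ·) (v b))) b)
        exact (Ordinal.typein_lt_typein (· < ·)).1 h1
      have hsS : s ⊆ ⋃ j, ⋃ _hj : j < i₂, ERchain f κ.ord.ToType j := by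
        intro b hb
        exact Set.mem_iUnion.2 ⟨v ⟨b, hb⟩, Set.mem_iUnion.2 ⟨hvi ⟨b, hb⟩, hv ⟨b, hb⟩⟩⟩
      obtain ⟨a, haS, has, haf⟩ := ERstep_spec hμ f hsS hsne hscard hy
      refine ⟨a, Set.mem_iUnion.2 ⟨i₂, ?_⟩, has, haf⟩
      rw [ERchain_eq]
      exact haS

/-- The recursively chosen end-homogeneous sequence. -/
private noncomputable def ERseq [Nonempty α] (f : α → α → C) (A : Set α) (z : α)
    (I : Type u) [LinearOrder I] [WellFoundedLT I] : I → α :=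
  wellFounded_lt.fix fun i rec =>
    Classical.epsilon fun x => x ∈ A ∧ (∀ j (hj : j < i), x ≠ rec j hj) ∧
      ∀ j (hj : j < i), f (rec j hj) x = f (rec j hj) z

private lemma ERseq_eq [Nonempty α] (f : α → α → C) (A : Set α) (z : α)
    (I : Type u) [LinearOrder I] [WellFoundedLT I] (i : I) :
    ERseq f A z I i = Classical.epsilon fun x => x ∈ A ∧
      (∀ j (_hj : j < i), x ≠ ERseq f A z I j) ∧
      ∀ j (_hj : j < i), f (ERseq f A z I j) x = f (ERseq f A z I j) z :=
  wellFounded_lt.fix_eq _ i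

/-- Pigeonhole for cardinals. -/
private lemma exists_big_fiber {ι : Type u} {κ : Cardinal.{u}} (hκ : ℵ₀ ≤ κ)
    (hC : #C ≤ κ) (hι : κ < #ι) (g : ι → C) : ∃ c, κ < #{i | g i = c} := by
  by_contra h
  push_neg at h
  have huniv : (Set.univ : Set ι) = ⋃ c, {i | g i = c} := by ext i; simp
  have hle : #ι ≤ κ := by
    calc #ι = #(Set.univ : Set ι) := (Cardinal.mk_univ).symm
    _ = #(⋃ c, {i | g i = c}) := by rw [huniv]
    _ ≤ #C * ⨆ c, #{i | g i = c} := Cardinal.mk_iUnion_le _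
    _ ≤ κ * κ := mul_le_mul' hC (ciSup_le' h)
    _ = κ := Cardinal.mul_eq_self hκ
  exact absurd hle hι.not_ge

/-- Erdős–Rado for pairs, in the form we need. -/
private theorem erdosRado {κ : Cardinal.{u}} (hκ : ℵ₀ ≤ κ) (hC : #C ≤ κ)
    (hα : 2 ^ κ < #α) (f : α → α → C) (hsymm : ∀ x y, f x y = f y x) :
    ∃ (H : Set α) (c : C), κ < #H ∧ ∀ x ∈ H, ∀ y ∈ H, x ≠ y → f x y = c := by
  classical
  haveI : Nonempty α := by
    rw [← Cardinal.mk_ne_zero_iff]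
    intro h
    rw [h] at hα
    exact absurd hα (Cardinal.zero_le _).not_gt
  obtain ⟨A, hAcard, hAclosed⟩ := exists_closed_set hκ hC f
  obtain ⟨z, hz⟩ : ∃ z, z ∉ A := by
    by_contra h
    push_neg at h
    have hu : A = Set.univ := Set.eq_univ_of_forall h
    rw [hu, Cardinal.mk_univ] at hAcard
    exact absurd hAcard hα.not_ge
  have hIcard : #((Order.succ κ).ord.ToType) = Order.succ κ := Cardinal.mk_ord_toType _
  set a : (Order.succ κ).ord.ToType → α := ERseq f A z ((Order.succ κ).ord.ToType)
    with hadef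
  have ha : ∀ i, a i ∈ A ∧ (∀ j, j < i → a i ≠ a j) ∧
      ∀ j, j < i → f (a j) (a i) = f (a j) z := by
    intro i
    refine wellFounded_lt.induction
      (C := fun i => a i ∈ A ∧ (∀ j, j < i → a i ≠ a j) ∧
        ∀ j, j < i → f (a j) (a i) = f (a j) z) i (fun i ih => ?_)
    show a i ∈ A ∧ (∀ j, j < i → a i ≠ a j) ∧ ∀ j, j < i → f (a j) (a i) = f (a j) z
    have hsA : {x | ∃ j, ∃ _ : j < i, a j = x} ⊆ A := by
      rintro x ⟨j, hj, rfl⟩; exact (ih j hj).1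
    have hscard : #{x | ∃ j, ∃ _ : j < i, a j = x} ≤ κ := by
      have heq : {x | ∃ j, ∃ _ : j < i, a j = x} =
          Set.range (fun j : {j // j < i} => a (j : _)) := by
        ext x
        simp only [Set.mem_setOf_eq, Set.mem_range, Subtype.exists, exists_prop]
      rw [heq]
      exact Cardinal.mk_range_le.trans (initialSeg_card_le i)
    have hzs : z ∉ {x | ∃ j, ∃ _ : j < i, a j = x} := fun hmem => hz (hsA hmem)
    obtain ⟨w, hwA, hws, hwf⟩ := hAclosed _ hsA hscard z hzs
    have hex : ∃ x, x ∈ A ∧ (∀ j (_hj : j < i), x ≠ a j) ∧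
        ∀ j (_hj : j < i), f (a j) x = f (a j) z :=
      ⟨w, hwA, fun j hj hxe => hws ⟨j, hj, hxe.symm⟩, fun j hj => hwf _ ⟨j, hj, rfl⟩⟩
    have hspec := Classical.epsilon_spec hex
    rw [hadef]
    rw [ERseq_eq f A z ((Order.succ κ).ord.ToType) i]
    exact hspec
  obtain ⟨c, hcfib⟩ := exists_big_fiber hκ hC
    (by rw [hIcard]; exact Order.lt_succ κ) (fun i => f (a i) z)
  refine ⟨a '' {i | f (a i) z = c}, c, ?_, ?_⟩
  · have hinj : Set.InjOn a {i | f (a i) z = c} := by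
      intro i _ j _ hij
      by_contra hne
      rcases lt_or_gt_of_ne hne with h | h
      · exact (ha j).2.1 i h hij.symm
      · exact (ha i).2.1 j h hij
    rw [Cardinal.mk_image_eq_of_injOn a _ hinj]
    exact hcfib
  · rintro x ⟨i, hi, rfl⟩ y ⟨j, hj, rfl⟩ hxy
    have hij : i ≠ j := fun h => hxy (by rw [h])
    rcases lt_or_gt_of_ne hij with h | h
    · rw [(ha j).2.2 i h]
      exact hi
    · rw [hsymm, (ha i).2.2 j h]
      exact hj

end ErdosRadoAux

/-- Hausdorff space with cellularity ≤ κ in which every point has a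
linked local π-base of cardinality ≤ κ has cardinality ≤ 2^κ. -/
theorem card_le_two_pow_of_cellular_and_linked
    {X : Type u} [TopologicalSpace X] [T2Space X] (κ : Cardinal.{u}) (hκ : ℵ₀ ≤ κ)
    (hc : ∀ 𝓒 : Set (Set X), IsCellular 𝓒 → #𝓒 ≤ κ)
    (hπ : ∀ p : X, ∃ 𝓑 : Set (Set X), IsLocalPiBase p 𝓑 ∧ Linked 𝓑 ∧ #𝓑 ≤ κ) :
    #X ≤ 2 ^ κ := by
  classical
  by_contra hcon
  push_neg at hcon
  haveI : Nonempty X := by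
    rw [← Cardinal.mk_ne_zero_iff]
    intro h
    rw [h] at hcon
    exact absurd hcon (Cardinal.zero_le _).not_gt
  letI : LinearOrder X := IsWellOrder.linearOrder WellOrderingRel
  have hμ : #(κ.ord.ToType) = κ := Cardinal.mk_ord_toType κ
  haveI : Nonempty (κ.ord.ToType) := by
    rw [Ordinal.toType_nonempty_iff_ne_zero, ne_eq, Cardinal.ord_eq_zero]
    exact (lt_of_lt_of_le Cardinal.aleph0_pos hκ).ne'
  -- enumerated linked local π-bases
  have hB : ∀ p : X, ∃ e : κ.ord.ToType → Set X,
      (∀ i, IsOpen (e i)) ∧ (∀ i j, (e i ∩ e j).Nonempty) ∧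
      ∀ U : Set X, IsOpen U → p ∈ U → ∃ i, e i ⊆ U := by
    intro p
    obtain ⟨B, ⟨hBopen, hBbase⟩, hBlinked, hBcard⟩ := hπ p
    have hBne : B.Nonempty := by
      obtain ⟨b, hb, -⟩ := hBbase Set.univ isOpen_univ (Set.mem_univ p)
      exact ⟨b, hb⟩
    obtain ⟨e, he⟩ := exists_range_eq (μ := κ.ord.ToType) B hBne (by rw [hμ]; exact hBcard)
    have hmem : ∀ i, e i ∈ B := fun i => he ▸ Set.mem_range_self i
    refine ⟨e, fun i => (hBopen _ (hmem i)).1, fun i j => hBlinked _ (hmem i) _ (hmem j), ?_⟩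
    intro U hU hpU
    obtain ⟨b, hbB, hbU⟩ := hBbase U hU hpU
    rw [← he] at hbB
    obtain ⟨i, rfl⟩ := hbB
    exact ⟨i, hbU⟩
  choose e heopen helinked hebase using hB
  have key : ∀ p q : X, p ≠ q → ∃ ij : κ.ord.ToType × κ.ord.ToType,
      e p ij.1 ∩ e q ij.2 = ∅ := by
    intro p q hpq
    obtain ⟨U, V, hU, hV, hpU, hqV, hUV⟩ := t2_separation hpq
    obtain ⟨i, hi⟩ := hebase p U hU hpU
    obtain ⟨j, hj⟩ := hebase q V hV hqV
    refine ⟨(i, j), ?_⟩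
    apply Set.eq_empty_of_subset_empty
    calc e p i ∩ e q j ⊆ U ∩ V := Set.inter_subset_inter hi hj
    _ = ∅ := Set.disjoint_iff_inter_eq_empty.1 hUV
  let F : X → X → κ.ord.ToType × κ.ord.ToType := fun p q =>
    if h : p < q then (key p q h.ne).choose
    else if h' : q < p then (key q p h'.ne).choose
    else Classical.arbitrary _
  have hFlt : ∀ p q (h : p < q), F p q = (key p q h.ne).choose := by
    intro p q h
    simp only [F]
    rw [dif_pos h]
  have hFsymm : ∀ p q, F p q = F q p := by
    intro p q
    rcases lt_trichotomy p q with h | h | h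
    · rw [hFlt p q h]
      simp only [F]
      rw [dif_neg (asymm h), dif_pos h]
    · rw [h]
    · rw [hFlt q p h]
      simp only [F]
      rw [dif_neg (asymm h), dif_pos h]
  have hCcard : #(κ.ord.ToType × κ.ord.ToType) ≤ κ := by
    have heq : #(κ.ord.ToType × κ.ord.ToType) = κ * κ := by simp [hμ]
    rw [heq, Cardinal.mul_eq_self hκ]
  obtain ⟨H, c, hHcard, hH⟩ := erdosRado hκ hCcard hcon F hFsymm
  have hdisj : ∀ p ∈ H, ∀ q ∈ H, p ≠ q → (e p c.1 ∩ e p c.2) ∩ (e q c.1 ∩ e q c.2) = ∅ := by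
    intro p hp q hq hpq
    rcases lt_or_gt_of_ne hpq with h | h
    · have hF : F p q = c := hH p hp q hq hpq
      rw [hFlt p q h] at hF
      have hspec := (key p q h.ne).choose_spec
      rw [hF] at hspec
      apply Set.eq_empty_of_subset_empty
      calc (e p c.1 ∩ e p c.2) ∩ (e q c.1 ∩ e q c.2) ⊆ e p c.1 ∩ e q c.2 := by
            rintro x ⟨⟨h1, -⟩, ⟨-, h4⟩⟩; exact ⟨h1, h4⟩
      _ = ∅ := hspec
    · have hF : F q p = c := hH q hq p hp hpq.symm
      rw [hFlt q p h] at hF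
      have hspec := (key q p h.ne).choose_spec
      rw [hF] at hspec
      apply Set.eq_empty_of_subset_empty
      calc (e p c.1 ∩ e p c.2) ∩ (e q c.1 ∩ e q c.2) ⊆ e q c.1 ∩ e p c.2 := by
            rintro x ⟨⟨-, h2⟩, ⟨h3, -⟩⟩; exact ⟨h3, h2⟩
      _ = ∅ := hspec
  have hGne : ∀ p, (e p c.1 ∩ e p c.2).Nonempty := fun p => helinked p c.1 c.2
  have hGopen : ∀ p, IsOpen (e p c.1 ∩ e p c.2) := fun p =>
    (heopen p c.1).inter (heopen p c.2)
  have hinj : Set.InjOn (fun p => e p c.1 ∩ e p c.2) H := by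
    intro p hp q hq hGeq
    by_contra hne
    have hd := hdisj p hp q hq hne
    simp only at hGeq
    rw [hGeq, Set.inter_self] at hd
    exact (hGne q).ne_empty hd
  have hcell : IsCellular ((fun p => e p c.1 ∩ e p c.2) '' H) := by
    constructor
    · rintro - ⟨p, hp, rfl⟩
      exact ⟨hGopen p, hGne p⟩
    · rintro - ⟨p, hp, rfl⟩ - ⟨q, hq, rfl⟩ huv
      have hpq : p ≠ q := fun h => huv (by rw [h])
      simp only [Function.onFun, id_eq]
      rw [Set.disjoint_iff_inter_eq_empty]
      exact hdisj p hp q hq hpq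
  have hle := hc _ hcell
  rw [Cardinal.mk_image_eq_of_injOn _ _ hinj] at hle
  exact absurd hle hHcard.not_ge
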